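/- Let X be a nonempty finite type, let K ≥ 1, let π_1,…,π_K be positive reals with ∑_{j=1}^K π_j = 1, let p_1,…,p_K be probability mass functions on X, and let δ be a real number with 0 < δ ≤ 1/8. Let ξ_1,…,ξ_K : X → ℝ satisfy |ξ_j x − 1| ≤ δ for all j and all x. Set p x = ∑_{j=1}^K π_j · p_j x and h x = ∑_{j=1}^K π_j · p_j x · ξ_j x. Let q* be a probability mass function on X minimizing L(q) = ∑_{x∈X} [ p x · log(h x/(h x + q x)) + q x · log(q x/(q x + h x)) ] over all probability mass functions q on X. Then for every x, |q* x / p x − 1| ≤ 16·δ, and in particular the total variation distance satisfies (1/2)·∑_{x∈X} |q* x − p x| ≤ 8·δ. -/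

import Mathlib

open Finset

open Finset Filter

lemma ua_deriv (P H : ℝ) (hH : 0 < H) {t : ℝ} (ht : 0 < t) :
    HasDerivAt (fun s => P * Real.log (H / (H + s)) + s * Real.log (s / (s + H)))
      (Real.log (t / (t + H)) + (H - P) / (t + H)) t := by
  have hHt : 0 < t + H := by linarith
  have d1 : HasDerivAt (fun s : ℝ => Real.log (H + s)) (1 / (H + t)) t := by
    simpa using ((hasDerivAt_id t).const_add H).log (by simp; linarith)
  have d2 : HasDerivAt (fun s : ℝ => Real.log (s + H)) (1 / (t + H)) t := by
    simpa using ((hasDerivAt_id t).add_const H).log (by simp; linarith)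
  have d3 : HasDerivAt Real.log t⁻¹ t := Real.hasDerivAt_log (ne_of_gt ht)
  have dg : HasDerivAt
      (fun s : ℝ => P * (Real.log H - Real.log (H + s)) + s * (Real.log s - Real.log (s + H)))
      (P * (0 - 1 / (H + t)) + (1 * (Real.log t - Real.log (t + H)) + t * (t⁻¹ - 1 / (t + H)))) t :=
    (((hasDerivAt_const t (Real.log H)).sub d1).const_mul P).add
      ((hasDerivAt_id t).mul (d3.sub d2))
  have heq : (fun s : ℝ => P * Real.log (H / (H + s)) + s * Real.log (s / (s + H)))
      =ᶠ[nhds t] (fun s : ℝ => P * (Real.log H - Real.log (H + s)) + s * (Real.log s - Real.log (s + H))) := by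
    filter_upwards [Ioi_mem_nhds ht] with s hs
    have hs0 : (0:ℝ) < s := hs
    rw [Real.log_div (by positivity) (by positivity), Real.log_div (by positivity) (by positivity)]
  have := dg.congr_of_eventuallyEq heq
  refine this.congr_deriv ?_
  rw [Real.log_div (by positivity) (by positivity)]
  field_simp
  ring
open Filter

lemma ua_deriv_le {f g : ℝ → ℝ} {a b fa gb : ℝ} (hb : 0 < b)
    (hf : HasDerivAt f fa a) (hg : HasDerivAt g gb b)
    (hle : ∀ ε : ℝ, 0 < ε → ε < b → g b - g (b - ε) ≤ f (a + ε) - f a) :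
    gb ≤ fa := by
  have hmap1 : Tendsto (fun ε : ℝ => a + ε) (nhdsWithin 0 (Set.Ioi 0)) (nhdsWithin a {a}ᶜ) := by
    apply tendsto_nhdsWithin_of_tendsto_nhds_of_eventually_within
    · have h1 : Tendsto (fun ε : ℝ => a + ε) (nhds 0) (nhds (a + 0)) :=
        tendsto_const_nhds.add tendsto_id
      rw [add_zero] at h1
      exact h1.mono_left nhdsWithin_le_nhds
    · filter_upwards [self_mem_nhdsWithin] with ε hε
      have h0 : (0:ℝ) < ε := hε
      simp only [Set.mem_compl_iff, Set.mem_singleton_iff]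
      intro hc; linarith [(by linarith [hc] : (0:ℝ) = -ε)]
  have hmap2 : Tendsto (fun ε : ℝ => b - ε) (nhdsWithin 0 (Set.Ioi 0)) (nhdsWithin b {b}ᶜ) := by
    apply tendsto_nhdsWithin_of_tendsto_nhds_of_eventually_within
    · have h1 : Tendsto (fun ε : ℝ => b - ε) (nhds 0) (nhds (b - 0)) :=
        tendsto_const_nhds.sub tendsto_id
      rw [sub_zero] at h1
      exact h1.mono_left nhdsWithin_le_nhds
    · filter_upwards [self_mem_nhdsWithin] with ε hε
      have h0 : (0:ℝ) < ε := hε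
      simp only [Set.mem_compl_iff, Set.mem_singleton_iff]
      intro hc; linarith
  have t1 : Tendsto (fun ε : ℝ => (f (a + ε) - f a) / ε) (nhdsWithin 0 (Set.Ioi 0)) (nhds fa) := by
    have := (hasDerivAt_iff_tendsto_slope.mp hf).comp hmap1
    apply this.congr
    intro ε
    simp only [Function.comp_apply, slope_def_field]
    rw [add_sub_cancel_left]
  have t2 : Tendsto (fun ε : ℝ => (g b - g (b - ε)) / ε) (nhdsWithin 0 (Set.Ioi 0)) (nhds gb) := by
    have := (hasDerivAt_iff_tendsto_slope.mp hg).comp hmap2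
    apply this.congr
    intro ε
    simp only [Function.comp_apply, slope_def_field]
    rw [show b - ε - b = -ε by ring, div_neg, ← neg_div, neg_sub]
  refine le_of_tendsto_of_tendsto t2 t1 ?_
  filter_upwards [Ioo_mem_nhdsGT_of_mem (Set.left_mem_Ico.mpr hb)] with ε hε
  have h2 := hle ε hε.1 hε.2
  gcongr
  exact le_of_lt hε.1

set_option maxHeartbeats 1000000

lemma ua_anchor_up (δ Q P H : ℝ) (hδ0 : 0 < δ) (hδ : δ ≤ 1/8) (hP : 0 < P) (hQ : 0 < Q)
    (hlo : (1-δ)*P ≤ H) (hhi : H ≤ (1+δ)*P) (hQP : Q ≤ P) :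
    Real.log (Q/(Q+H)) + (H-P)/(Q+H) ≤ Real.log (1/(2-δ)) + δ := by
  have hH : 0 < H := by nlinarith
  have hQH : 0 < Q + H := by linarith
  have l1 : Real.log (Q/(Q+H)) ≤ Real.log (1/(2-δ)) := by
    apply Real.log_le_log (by positivity)
    rw [div_le_div_iff₀ hQH (by linarith)]
    nlinarith
  have l2 : (H-P)/(Q+H) ≤ δ := by
    rw [div_le_iff₀ hQH]
    rcases le_or_gt H P with hc | hc
    · nlinarith
    · nlinarith
  linarith

lemma ua_anchor_down (δ Q P H : ℝ) (hδ0 : 0 < δ) (hδ : δ ≤ 1/8) (hP : 0 < P) (hQ : 0 < Q)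
    (hlo : (1-δ)*P ≤ H) (hhi : H ≤ (1+δ)*P) (hPQ : P ≤ Q) :
    Real.log (1/(2+δ)) - δ/(2-δ) ≤ Real.log (Q/(Q+H)) + (H-P)/(Q+H) := by
  have hH : 0 < H := by nlinarith
  have hQH : 0 < Q + H := by linarith
  have l1 : Real.log (1/(2+δ)) ≤ Real.log (Q/(Q+H)) := by
    apply Real.log_le_log (by positivity)
    rw [div_le_div_iff₀ (by linarith) hQH]
    nlinarith
  have l2 : -(δ/(2-δ)) ≤ (H-P)/(Q+H) := by
    rw [← neg_div, div_le_div_iff₀ (by linarith) hQH]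
    rcases le_or_gt H P with hc | hc
    · nlinarith
    · nlinarith
  linarith

lemma ua_exp_quad {r : ℝ} (h0 : 0 < r) (h1 : r ≤ 1) : Real.exp r ≤ 1 + r + r^2 := by
  have hb := Real.exp_bound (x := r) (by rw [abs_of_pos h0]; exact h1) (by norm_num : 0 < 2)
  simp [Finset.sum_range_succ] at hb
  rw [abs_le] at hb
  nlinarith [hb.2, sq_nonneg r]

lemma ua_numeric (δ Q P H lam : ℝ) (hδ0 : 0 < δ) (hδ : δ ≤ 1/8)
    (hP : 0 < P) (hQ : 0 < Q) (hlo : (1-δ)*P ≤ H) (hhi : H ≤ (1+δ)*P)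
    (hlam : Real.log (Q/(Q+H)) + (H-P)/(Q+H) = lam)
    (hup : lam ≤ Real.log (1/(2-δ)) + δ)
    (hdown : Real.log (1/(2+δ)) - δ/(2-δ) ≤ lam) :
    (1-16*δ)*P ≤ Q ∧ Q ≤ (1+16*δ)*P := by
  have hH : 0 < H := by nlinarith
  have hQH : 0 < Q + H := by linarith
  have hd1 : (0:ℝ) < 1 - δ := by linarith
  have hd2 : (0:ℝ) < 2 - δ := by linarith
  constructor
  · -- lower bound
    obtain ⟨r', hr'⟩ : ∃ r' : ℝ, r' = δ + δ/(2-δ) := ⟨_, rfl⟩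
    have hr'0 : 0 < r' := by rw [hr']; positivity
    have hr'le : r' ≤ 23*δ/15 := by
      have : δ/(2-δ) ≤ 8*δ/15 := by rw [div_le_iff₀ hd2]; nlinarith
      rw [hr']; linarith
    have hr'1 : r' ≤ 23/120 := by linarith
    have s1 : (H-P)/(Q+H) ≤ δ := by
      rw [div_le_iff₀ hQH]
      rcases le_or_gt H P with hc | hc
      · nlinarith
      · nlinarith
    have s2 : Real.log (1/(2+δ)) - r' ≤ Real.log (Q/(Q+H)) := by
      have he : Real.log (Q/(Q+H)) = lam - (H-P)/(Q+H) := by linarith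
      rw [he, hr']; linarith
    have s3 : (1 - r')/(2+δ) ≤ Q/(Q+H) := by
      have he : Real.exp (Real.log (1/(2+δ)) - r') ≤ Q/(Q+H) :=
        (Real.le_log_iff_exp_le (by positivity)).mp s2
      have he2 : (1 - r')/(2+δ) ≤ Real.exp (Real.log (1/(2+δ)) - r') := by
        rw [Real.exp_sub, Real.exp_log (by positivity), div_div,
          div_le_div_iff₀ (by linarith) (by positivity)]
        have h2 : (1 - r') ≤ Real.exp (-r') := by linarith [Real.add_one_le_exp (-r')]
        have h3 : (1 - r') * Real.exp r' ≤ 1 := by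
          calc (1-r')*Real.exp r' ≤ Real.exp (-r') * Real.exp r' :=
                mul_le_mul_of_nonneg_right h2 (Real.exp_pos _).le
            _ = 1 := by rw [← Real.exp_add]; simp
        have h4 := mul_le_mul_of_nonneg_left h3 (by linarith : (0:ℝ) ≤ 2+δ)
        nlinarith [h4]
      linarith
    have s4 : (1 - r')*(Q+H) ≤ (2+δ)*Q := by
      rw [div_le_div_iff₀ (by linarith) hQH] at s3
      linarith
    have s5 : (1-r')*((1-δ)*P) ≤ Q*(1+δ+r') := by
      have hnn : (0:ℝ) ≤ 1 - r' := by linarith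
      nlinarith [mul_le_mul_of_nonneg_left hlo hnn]
    have s6 : (1-16*δ)*(1+δ+r') ≤ (1-r')*(1-δ) := by
      nlinarith [mul_pos hδ0 hr'0, mul_le_mul_of_nonneg_right hr'le hδ0.le, sq_nonneg δ]
    have hpos : (0:ℝ) < 1+δ+r' := by linarith
    nlinarith [mul_le_mul_of_nonneg_right s6 hP.le]
  · -- upper bound
    obtain ⟨r, hr⟩ : ∃ r : ℝ, r = δ + δ/(1-δ) := ⟨_, rfl⟩
    have hr0 : 0 < r := by rw [hr]; positivity
    have hrle : r ≤ 15*δ/7 := by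
      have : δ/(1-δ) ≤ 8*δ/7 := by rw [div_le_iff₀ hd1]; nlinarith
      rw [hr]; linarith
    have hr1 : r ≤ 15/56 := by linarith
    have s1 : -(δ/(1-δ)) ≤ (H-P)/(Q+H) := by
      rw [← neg_div, div_le_div_iff₀ hd1 hQH]
      rcases le_or_gt H P with hc | hc
      · nlinarith
      · nlinarith
    have s2 : Real.log (Q/(Q+H)) ≤ Real.log (1/(2-δ)) + r := by
      have he : Real.log (Q/(Q+H)) = lam - (H-P)/(Q+H) := by linarith
      rw [he, hr]; linarith
    have s3 : Q/(Q+H) ≤ (1 + r + r^2)/(2-δ) := by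
      have he : Q/(Q+H) ≤ Real.exp (Real.log (1/(2-δ)) + r) :=
        (Real.log_le_iff_le_exp (by positivity)).mp s2
      have he2 : Real.exp (Real.log (1/(2-δ)) + r) ≤ (1 + r + r^2)/(2-δ) := by
        rw [Real.exp_add, Real.exp_log (by positivity)]
        have h2 : Real.exp r ≤ 1 + r + r^2 := ua_exp_quad hr0 (by linarith)
        calc 1/(2-δ) * Real.exp r ≤ 1/(2-δ) * (1 + r + r^2) := by
              apply mul_le_mul_of_nonneg_left h2 (by positivity)
          _ = (1 + r + r^2)/(2-δ) := by ring
      linarith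
    have s4 : Q*(2-δ) ≤ (1+r+r^2)*(Q+H) := by
      rw [div_le_div_iff₀ hQH hd2] at s3
      linarith
    have hApos : (0:ℝ) < 1+r+r^2 := by positivity
    have s5 : Q*(2-δ-(1+r+r^2)) ≤ (1+r+r^2)*((1+δ)*P) := by
      nlinarith [mul_le_mul_of_nonneg_left hhi hApos.le]
    have hr2 : r*r ≤ (15/56)*(15*δ/7) := by
      nlinarith [mul_le_mul hr1 hrle hr0.le (by norm_num : (0:ℝ) ≤ 15/56)]
    have s6 : (1+r+r^2)*(1+δ) ≤ (1+16*δ)*(2-δ-(1+r+r^2)) := by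
      nlinarith [mul_le_mul_of_nonneg_right hrle hδ0.le, hr2, sq_nonneg δ, mul_pos hδ0 hr0,
        mul_le_mul_of_nonneg_right hr2 hδ0.le, mul_le_mul_of_nonneg_right hrle (mul_pos hδ0 hδ0).le]
    have hpos : (0:ℝ) < 2-δ-(1+r+r^2) := by nlinarith [hr2]
    nlinarith [mul_le_mul_of_nonneg_right s6 hP.le]

/-- Corollary 1 (Suboptimality Bound for UA-GAN): with `K ≥ 1` sites, positive
mixing weights `π` summing to `1`, local pmfs `p j`, perturbations `ξ j` with
`|ξ j x − 1| ≤ δ ≤ 1/8`, target mixture `p x = ∑ j, π j * p j x`, and effective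
density `h x = ∑ j, π j * p j x * ξ j x`, the minimizer `q*` of the perturbed
Jensen–Shannon loss satisfies `|q* x / p x − 1| ≤ 16δ` pointwise, and the total
variation distance is at most `8δ`. -/
theorem stmt_11 {X : Type*} [Fintype X] [Nonempty X]
    (K : ℕ) (hK : 1 ≤ K)
    (π : Fin K → ℝ) (hπ : ∀ j, 0 < π j) (hπs : ∑ j, π j = 1)
    (p : Fin K → X → ℝ) (hp : ∀ j x, 0 < p j x) (hps : ∀ j, ∑ x, p j x = 1)
    (δ : ℝ) (hδ0 : 0 < δ) (hδ : δ ≤ 1 / 8)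
    (ξ : Fin K → X → ℝ) (hξ : ∀ j x, |ξ j x - 1| ≤ δ)
    (pmix : X → ℝ) (hpmix : ∀ x, pmix x = ∑ j, π j * p j x)
    (h : X → ℝ) (hh : ∀ x, h x = ∑ j, π j * p j x * ξ j x)
    (qs : X → ℝ) (hqs : ∀ x, 0 < qs x) (hqss : ∑ x, qs x = 1)
    (hmin : ∀ q : X → ℝ, (∀ x, 0 < q x) → (∑ x, q x = 1) →
      (∑ x, (pmix x * Real.log (h x / (h x + qs x)) +
        qs x * Real.log (qs x / (qs x + h x)))) ≤
      (∑ x, (pmix x * Real.log (h x / (h x + q x)) +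
        q x * Real.log (q x / (q x + h x))))) :
    (∀ x, |qs x / pmix x - 1| ≤ 16 * δ) ∧
    (1 / 2) * (∑ x, |qs x - pmix x|) ≤ 8 * δ := by
  classical
  haveI : Nonempty (Fin K) := Fin.pos_iff_nonempty.mp hK
  have hP : ∀ x, 0 < pmix x := by
    intro x; rw [hpmix]
    exact Finset.sum_pos (fun j _ => mul_pos (hπ j) (hp j x)) Finset.univ_nonempty
  have hHlo : ∀ x, (1-δ)*pmix x ≤ h x ∧ h x ≤ (1+δ)*pmix x := by
    intro x
    have habs : |h x - pmix x| ≤ δ * pmix x := by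
      rw [hh, hpmix, ← Finset.sum_sub_distrib]
      calc |∑ j, (π j * p j x * ξ j x - π j * p j x)|
          ≤ ∑ j, |π j * p j x * ξ j x - π j * p j x| := Finset.abs_sum_le_sum_abs _ _
        _ ≤ ∑ j, δ * (π j * p j x) := by
            apply Finset.sum_le_sum
            intro j _
            have he : π j * p j x * ξ j x - π j * p j x = (π j * p j x) * (ξ j x - 1) := by ring
            rw [he, abs_mul, abs_of_pos (mul_pos (hπ j) (hp j x))]
            calc (π j * p j x) * |ξ j x - 1| ≤ (π j * p j x) * δ :=
                  mul_le_mul_of_nonneg_left (hξ j x) (le_of_lt (mul_pos (hπ j) (hp j x)))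
              _ = δ * (π j * p j x) := by ring
        _ = δ * ∑ j, π j * p j x := by rw [Finset.mul_sum]
    obtain ⟨hl, hr⟩ := abs_le.mp habs
    constructor <;> nlinarith
  have hHpos : ∀ x, 0 < h x := by
    intro x
    have := (hHlo x).1
    nlinarith [hP x]
  have hpsum : ∑ x, pmix x = 1 := by
    have h1 : ∀ j : Fin K, ∑ x, π j * p j x = π j := by
      intro j; rw [← Finset.mul_sum, hps j, mul_one]
    calc ∑ x, pmix x = ∑ x, ∑ j, π j * p j x := Finset.sum_congr rfl (fun x _ => hpmix x)
      _ = ∑ j, ∑ x, π j * p j x := Finset.sum_comm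
      _ = ∑ j, π j := Finset.sum_congr rfl (fun j _ => h1 j)
      _ = 1 := hπs
  have hd : ∀ x : X, HasDerivAt
      (fun t => pmix x * Real.log (h x / (h x + t)) + t * Real.log (t / (t + h x)))
      (Real.log (qs x / (qs x + h x)) + (h x - pmix x) / (qs x + h x)) (qs x) :=
    fun x => ua_deriv (pmix x) (h x) (hHpos x) (hqs x)
  have exch : ∀ x y : X, x ≠ y → ∀ ε : ℝ, 0 < ε → ε < qs y →
      (pmix y * Real.log (h y / (h y + qs y)) + qs y * Real.log (qs y / (qs y + h y))) -
      (pmix y * Real.log (h y / (h y + (qs y - ε))) +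
        (qs y - ε) * Real.log ((qs y - ε) / ((qs y - ε) + h y)))
      ≤ (pmix x * Real.log (h x / (h x + (qs x + ε))) +
          (qs x + ε) * Real.log ((qs x + ε) / ((qs x + ε) + h x))) -
        (pmix x * Real.log (h x / (h x + qs x)) + qs x * Real.log (qs x / (qs x + h x))) := by
    intro x y hxy ε hε hεy
    set q : X → ℝ := fun z => if z = x then qs x + ε else if z = y then qs y - ε else qs z with hq
    have hqx : q x = qs x + ε := by simp [hq]
    have hqy : q y = qs y - ε := by simp [hq, Ne.symm hxy]
    have hqz : ∀ z, z ≠ x → z ≠ y → q z = qs z := by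
      intro z h1 h2; simp [hq, h1, h2]
    have hqpos : ∀ z, 0 < q z := by
      intro z
      by_cases h1 : z = x
      · rw [h1, hqx]; linarith [hqs x]
      · by_cases h2 : z = y
        · rw [h2, hqy]; linarith
        · rw [hqz z h1 h2]; exact hqs z
    have hy' : y ∈ Finset.univ.erase x := Finset.mem_erase.mpr ⟨Ne.symm hxy, Finset.mem_univ y⟩
    have hsplit : ∀ f : X → ℝ,
        ∑ z, f z = f x + f y + ∑ z ∈ (Finset.univ.erase x).erase y, f z := by
      intro f
      rw [← Finset.add_sum_erase _ f (Finset.mem_univ x), ← Finset.add_sum_erase _ f hy']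
      ring
    have hmem : ∀ z ∈ (Finset.univ.erase x).erase y, z ≠ x ∧ z ≠ y := by
      intro z hz
      exact ⟨(Finset.mem_erase.mp (Finset.mem_erase.mp hz).2).1, (Finset.mem_erase.mp hz).1⟩
    have htail : ∑ z ∈ (Finset.univ.erase x).erase y, q z
        = ∑ z ∈ (Finset.univ.erase x).erase y, qs z :=
      Finset.sum_congr rfl (fun z hz => hqz z (hmem z hz).1 (hmem z hz).2)
    have hqsum : ∑ z, q z = 1 := by
      have h2 := hsplit qs
      rw [h2] at hqss
      rw [hsplit q, htail, hqx, hqy]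
      linarith
    have hm := hmin q hqpos hqsum
    rw [hsplit (fun z => pmix z * Real.log (h z / (h z + qs z)) +
          qs z * Real.log (qs z / (qs z + h z))),
        hsplit (fun z => pmix z * Real.log (h z / (h z + q z)) +
          q z * Real.log (q z / (q z + h z)))] at hm
    have htail2 : ∑ z ∈ (Finset.univ.erase x).erase y,
          (pmix z * Real.log (h z / (h z + q z)) + q z * Real.log (q z / (q z + h z)))
        = ∑ z ∈ (Finset.univ.erase x).erase y,
          (pmix z * Real.log (h z / (h z + qs z)) + qs z * Real.log (qs z / (qs z + h z))) :=
      Finset.sum_congr rfl (fun z hz => by rw [hqz z (hmem z hz).1 (hmem z hz).2])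
    rw [htail2, hqx, hqy] at hm
    linarith
  have hFle : ∀ x y : X,
      Real.log (qs y / (qs y + h y)) + (h y - pmix y) / (qs y + h y) ≤
      Real.log (qs x / (qs x + h x)) + (h x - pmix x) / (qs x + h x) := by
    intro x y
    rcases eq_or_ne x y with rfl | hxy
    · exact le_refl _
    · exact ua_deriv_le (hqs y) (hd x) (hd y) (fun ε h1 h2 => exch x y hxy ε h1 h2)
  have hFeq : ∀ x y : X,
      Real.log (qs x / (qs x + h x)) + (h x - pmix x) / (qs x + h x) =
      Real.log (qs y / (qs y + h y)) + (h y - pmix y) / (qs y + h y) :=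
    fun x y => le_antisymm (hFle y x) (hFle x y)
  obtain ⟨xp, hxp⟩ : ∃ x, pmix x ≤ qs x := by
    by_contra hc
    push_neg at hc
    have := Finset.sum_lt_sum_of_nonempty Finset.univ_nonempty (fun i _ => hc i)
    rw [hqss, hpsum] at this
    exact lt_irrefl 1 this
  obtain ⟨xm, hxm⟩ : ∃ x, qs x ≤ pmix x := by
    by_contra hc
    push_neg at hc
    have := Finset.sum_lt_sum_of_nonempty Finset.univ_nonempty (fun i _ => hc i)
    rw [hqss, hpsum] at this
    exact lt_irrefl 1 this
  have hbound : ∀ x, (1-16*δ)*pmix x ≤ qs x ∧ qs x ≤ (1+16*δ)*pmix x := by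
    intro x
    apply ua_numeric δ (qs x) (pmix x) (h x)
      (Real.log (qs x / (qs x + h x)) + (h x - pmix x) / (qs x + h x))
      hδ0 hδ (hP x) (hqs x) (hHlo x).1 (hHlo x).2 rfl
    · rw [hFeq x xm]
      exact ua_anchor_up δ (qs xm) (pmix xm) (h xm) hδ0 hδ (hP xm) (hqs xm)
        (hHlo xm).1 (hHlo xm).2 hxm
    · rw [hFeq x xp]
      exact ua_anchor_down δ (qs xp) (pmix xp) (h xp) hδ0 hδ (hP xp) (hqs xp)
        (hHlo xp).1 (hHlo xp).2 hxp
  constructor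
  · intro x
    obtain ⟨hl, hr⟩ := hbound x
    rw [abs_le]
    have h1 : (1-16*δ) ≤ qs x / pmix x := (le_div_iff₀ (hP x)).mpr (by linarith)
    have h2 : qs x / pmix x ≤ 1+16*δ := (div_le_iff₀ (hP x)).mpr (by linarith)
    constructor <;> linarith
  · have hsum : ∑ x, |qs x - pmix x| ≤ ∑ x, 16*δ*pmix x := by
      apply Finset.sum_le_sum
      intro x _
      obtain ⟨hl, hr⟩ := hbound x
      rw [abs_le]
      constructor <;> nlinarith [hP x]
    rw [← Finset.mul_sum, hpsum, mul_one] at hsum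
    linarith
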